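/- Let X be a real Banach space and let q : X → [0,+∞) be a continuous homogeneous polynomial of degree 2n satisfying ‖x‖^{2n} ≤ q(x) ≤ K‖x‖^{2n} for all x ∈ X, where K > 1. Then the function Q : X → [0,+∞) defined by Q(x) = (1 + q(x))^{1/(2n)} − 1 is real analytic, is Lipschitz on all of X, and satisfies inf{Q(x) : ‖x‖ ≥ 1} > 0 = Q(0). Moreover, for every r ≥ 1 and every x ∈ X, if Q(x) < 4r then ‖x‖ < 8r; in particular Q(x) ≥ ‖x‖/2 whenever ‖x‖ ≥ 8. -/

import Mathlib

open scoped NNReal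

/-- A continuous homogeneous polynomial of degree `k` on `X`. -/
def IsHomogPoly {X : Type*} [NormedAddCommGroup X] [NormedSpace ℝ X] (k : ℕ) (q : X → ℝ) :
    Prop :=
  ∃ A : ContinuousMultilinearMap ℝ (fun _ : Fin k => X) ℝ, ∀ x : X, q x = A (fun _ => x)

/-- Real analyticity of `t ↦ t ^ p` (rpow) at positive points. -/
lemma analyticAt_rpow_of_pos {p t : ℝ} (ht : 0 < t) :
    AnalyticAt ℝ (fun s : ℝ => s ^ p) t := by
  have h1 : AnalyticAt ℂ (fun z : ℂ => z ^ (p : ℂ)) (t : ℂ) :=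
    (analyticAt_id).cpow analyticAt_const (by exact Complex.ofReal_mem_slitPlane.2 ht)
  have h2 : AnalyticAt ℝ (fun z : ℂ => z ^ (p : ℂ)) (t : ℂ) := h1.restrictScalars
  have h3 : AnalyticAt ℝ (fun s : ℝ => ((s : ℂ) ^ (p : ℂ))) t :=
    h2.comp (Complex.ofRealCLM.analyticAt t)
  have h4 : AnalyticAt ℝ (fun s : ℝ => ((s : ℂ) ^ (p : ℂ)).re) t :=
    (Complex.reCLM.analyticAt _).comp h3
  apply h4.congr
  filter_upwards [eventually_gt_nhds ht] with s hs
  rw [← Complex.ofReal_cpow hs.le, Complex.ofReal_re]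

/-- Let `X` be a real Banach space and `q` a continuous homogeneous
polynomial of degree `2n` with `‖x‖^(2n) ≤ q x ≤ K‖x‖^(2n)` (`K > 1`). Then
`Q x = (1 + q x)^(1/(2n)) - 1` is real analytic, Lipschitz on all of `X`, satisfies
`inf {Q x : ‖x‖ ≥ 1} > 0 = Q 0`, and for every `r ≥ 1`, `Q x < 4r → ‖x‖ < 8r`; in
particular `Q x ≥ ‖x‖/2` whenever `‖x‖ ≥ 8`. -/
theorem stmt6 (X : Type*) [NormedAddCommGroup X] [NormedSpace ℝ X]
    (n : ℕ) (hn : 0 < n) (K : ℝ) (hK : 1 < K)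
    (q : X → ℝ) (hq : IsHomogPoly (2 * n) q)
    (hql : ∀ x : X, ‖x‖ ^ (2 * n) ≤ q x) (hqu : ∀ x : X, q x ≤ K * ‖x‖ ^ (2 * n))
    (Q : X → ℝ) (hQ : ∀ x : X, Q x = (1 + q x) ^ (1 / (2 * (n : ℝ))) - 1) :
    (∀ x, AnalyticAt ℝ Q x) ∧
    (∃ L : ℝ≥0, LipschitzWith L Q) ∧
    (∃ c : ℝ, 0 < c ∧ ∀ x : X, 1 ≤ ‖x‖ → c ≤ Q x) ∧
    Q 0 = 0 ∧
    (∀ r : ℝ, 1 ≤ r → ∀ x : X, Q x < 4 * r → ‖x‖ < 8 * r) ∧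
    (∀ x : X, 8 ≤ ‖x‖ → ‖x‖ / 2 ≤ Q x) := by
  obtain ⟨A, hA⟩ := hq
  set p : ℝ := 1 / (2 * (n : ℝ)) with hp
  have hk0 : (0:ℝ) < 2 * (n : ℝ) := by positivity
  have hppos : 0 < p := by positivity
  have hq0 : ∀ x : X, 0 ≤ q x := fun x => le_trans (by positivity) (hql x)
  have h1q : ∀ x : X, 0 < 1 + q x := fun x => by linarith [hq0 x]
  -- key estimate : ‖x‖ ≤ (1 + q x) ^ p
  have key : ∀ x : X, ‖x‖ ≤ (1 + q x) ^ p := by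
    intro x
    have h1 : ‖x‖ ^ (2 * n) ≤ 1 + q x := by linarith [hql x]
    have h2 : (‖x‖ ^ (2 * n)) ^ p ≤ (1 + q x) ^ p :=
      Real.rpow_le_rpow (by positivity) h1 hppos.le
    calc ‖x‖ = (‖x‖ ^ (2 * n)) ^ p := by
              rw [← Real.rpow_natCast ‖x‖ (2 * n), ← Real.rpow_mul (norm_nonneg x)]
              rw [show ((2 * n : ℕ) : ℝ) * p = 1 by
                rw [hp]; push_cast; exact mul_one_div_cancel hk0.ne']
              exact (Real.rpow_one _).symm
      _ ≤ (1 + q x) ^ p := h2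
  have keyQ : ∀ x : X, ‖x‖ - 1 ≤ Q x := by
    intro x
    rw [hQ x]
    have := key x
    linarith
  -- q 0 = 0
  have hq00 : q 0 = 0 := by
    have h1 := hql 0
    have h2 := hqu 0
    simp [zero_pow (by omega : 2 * n ≠ 0)] at h1 h2
    linarith
  refine ⟨?_, ?_, ?_, ?_, ?_, ?_⟩
  · -- analyticity
    intro x
    have qa : AnalyticAt ℝ q x := by
      have h1 : AnalyticAt ℝ (fun y : X => A (fun _ => y)) x := by
        have hdiag : AnalyticAt ℝ
            (fun y : X => (fun _ : Fin (2 * n) => y)) x :=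
          (ContinuousLinearMap.pi fun _ : Fin (2 * n) =>
            ContinuousLinearMap.id ℝ X).analyticAt x
        exact A.analyticAt.comp hdiag
      exact h1.congr (Filter.EventuallyEq.of_eq (funext fun y => (hA y).symm))
    have hinner : AnalyticAt ℝ (fun y : X => 1 + q y) x := analyticAt_const.add qa
    have h2 : AnalyticAt ℝ (fun y : X => (1 + q y) ^ p - 1) x := by
      have houter : AnalyticAt ℝ (fun s : ℝ => s ^ p) (1 + q x) :=
        analyticAt_rpow_of_pos (h1q x)
      have hcomp : AnalyticAt ℝ ((fun s : ℝ => s ^ p) ∘ (fun y : X => 1 + q y)) x :=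
        AnalyticAt.comp (f := fun y : X => 1 + q y) (x := x) houter hinner
      exact hcomp.sub analyticAt_const
    exact h2.congr (Filter.EventuallyEq.of_eq (funext fun y => (hQ y).symm))
  · -- Lipschitz
    refine ⟨‖A‖₊, ?_⟩
    rw [← lipschitzOnWith_univ]
    have hQfun : Q = fun y : X => (1 + q y) ^ p - 1 := funext hQ
    rw [hQfun]
    set Pi : X →L[ℝ] (Π _ : Fin (2 * n), X) :=
      ContinuousLinearMap.pi (fun _ : Fin (2 * n) => ContinuousLinearMap.id ℝ X) with hPi
    set B : X → (X →L[ℝ] ℝ) := fun x =>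
      (p * (1 + q x) ^ (p - 1)) • ((A.linearDeriv (fun _ => x)).comp Pi) with hB
    have hqd : ∀ x : X, HasFDerivAt q ((A.linearDeriv (fun _ => x)).comp Pi) x := by
      intro x
      have h2 : HasFDerivAt (fun y : X => (fun _ : Fin (2 * n) => y)) Pi x :=
        Pi.hasFDerivAt
      have h1 : HasFDerivAt (⇑A)
          (A.linearDeriv (fun _ => x)) (fun _ => x) := A.hasFDerivAt _
      have h3 := h1.comp x h2
      exact h3.congr_of_eventuallyEq (Filter.EventuallyEq.of_eq (funext fun y => hA y))
    have hQd : ∀ x : X, HasFDerivAt (fun y : X => (1 + q y) ^ p - 1) (B x) x := by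
      intro x
      have h0 : HasFDerivAt (fun y : X => 1 + q y)
          ((A.linearDeriv (fun _ => x)).comp Pi) x := (hqd x).const_add 1
      have h1 := h0.rpow_const (p := p) (Or.inl (h1q x).ne')
      exact h1.sub_const 1
    apply Convex.lipschitzOnWith_of_nnnorm_hasFDerivWithin_le
      (f' := B) (fun x _ => (hQd x).hasFDerivWithinAt) ?_ convex_univ
    intro x _
    have hDnorm : ‖(A.linearDeriv (fun _ => x)).comp Pi‖ ≤
        (2 * n : ℝ) * ‖A‖ * ‖x‖ ^ (2 * n - 1) := by
      apply ContinuousLinearMap.opNorm_le_bound _ (by positivity)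
      intro y
      have hPiy : Pi y = (fun _ : Fin (2 * n) => y) := rfl
      rw [ContinuousLinearMap.comp_apply, hPiy, ContinuousMultilinearMap.linearDeriv_apply]
      have hterm : ∀ i : Fin (2 * n),
          ‖A (Function.update (fun _ : Fin (2 * n) => x) i y)‖ ≤
            ‖A‖ * (‖y‖ * ‖x‖ ^ (2 * n - 1)) := by
        intro i
        have h1 := A.le_opNorm (Function.update (fun _ : Fin (2 * n) => x) i y)
        have h2 : (∏ j, ‖Function.update (fun _ : Fin (2 * n) => x) i y j‖) =
            ‖y‖ * ‖x‖ ^ (2 * n - 1) := by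
          have h3 : ∀ j, ‖Function.update (fun _ : Fin (2 * n) => x) i y j‖ =
              Function.update (fun _ : Fin (2 * n) => ‖x‖) i ‖y‖ j := by
            intro j
            exact (Function.apply_update (fun _ v => ‖v‖) (fun _ => x) i y j)
          simp only [h3]
          rw [Finset.prod_update_of_mem (Finset.mem_univ i)]
          rw [Finset.prod_const]
          congr 1
          rw [Finset.card_sdiff_of_subset (Finset.subset_univ {i})]
          simp
        calc ‖A (Function.update (fun _ : Fin (2 * n) => x) i y)‖
            ≤ ‖A‖ * ∏ j, ‖Function.update (fun _ : Fin (2 * n) => x) i y j‖ := h1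
          _ = ‖A‖ * (‖y‖ * ‖x‖ ^ (2 * n - 1)) := by rw [h2]
      calc ‖∑ i, A (Function.update (fun _ : Fin (2 * n) => x) i y)‖
          ≤ ∑ i, ‖A (Function.update (fun _ : Fin (2 * n) => x) i y)‖ :=
            norm_sum_le _ _
        _ ≤ ∑ _i : Fin (2 * n), ‖A‖ * (‖y‖ * ‖x‖ ^ (2 * n - 1)) :=
            Finset.sum_le_sum (fun i _ => hterm i)
        _ = (2 * n : ℝ) * ‖A‖ * ‖x‖ ^ (2 * n - 1) * ‖y‖ := by
            rw [Finset.sum_const, Finset.card_univ, Fintype.card_fin]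
            push_cast
            ring
    have hpow : (1 + q x) ^ (p - 1) * ‖x‖ ^ (2 * n - 1) ≤ 1 := by
      have hxb : ‖x‖ ^ (2 * n - 1) ≤ (1 + q x) ^ (1 - p) := by
        calc ‖x‖ ^ (2 * n - 1) ≤ ((1 + q x) ^ p) ^ (2 * n - 1) :=
              pow_le_pow_left₀ (norm_nonneg x) (key x) _
          _ = (1 + q x) ^ (p * ((2 * n - 1 : ℕ) : ℝ)) := by
              rw [← Real.rpow_natCast ((1 + q x) ^ p) (2 * n - 1),
                ← Real.rpow_mul (h1q x).le]
          _ = (1 + q x) ^ (1 - p) := by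
              congr 1
              have : ((2 * n - 1 : ℕ) : ℝ) = 2 * (n : ℝ) - 1 := by
                push_cast [Nat.cast_sub (by omega : 1 ≤ 2 * n)]
                ring
              rw [this, hp]
              field_simp
      have hpos : (0:ℝ) < (1 + q x) ^ (p - 1) := Real.rpow_pos_of_pos (h1q x) _
      calc (1 + q x) ^ (p - 1) * ‖x‖ ^ (2 * n - 1)
          ≤ (1 + q x) ^ (p - 1) * (1 + q x) ^ (1 - p) :=
            mul_le_mul_of_nonneg_left hxb hpos.le
        _ = (1 + q x) ^ ((p - 1) + (1 - p)) := (Real.rpow_add (h1q x) _ _).symm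
        _ = 1 := by norm_num
    have hBn : ‖B x‖ ≤ ‖A‖ := by
      rw [hB]
      have hppow : (0:ℝ) < (1 + q x) ^ (p - 1) := Real.rpow_pos_of_pos (h1q x) _
      calc ‖(p * (1 + q x) ^ (p - 1)) • ((A.linearDeriv (fun _ => x)).comp Pi)‖
          ≤ ‖p * (1 + q x) ^ (p - 1)‖ * ‖(A.linearDeriv (fun _ => x)).comp Pi‖ :=
            ContinuousLinearMap.opNorm_smul_le _ _
        _ = p * (1 + q x) ^ (p - 1) * ‖(A.linearDeriv (fun _ => x)).comp Pi‖ := by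
            rw [Real.norm_eq_abs, abs_of_pos (by positivity)]
        _ ≤ p * (1 + q x) ^ (p - 1) * ((2 * n : ℝ) * ‖A‖ * ‖x‖ ^ (2 * n - 1)) := by
            apply mul_le_mul_of_nonneg_left hDnorm (by positivity)
        _ = (p * (2 * n : ℝ)) * ‖A‖ * ((1 + q x) ^ (p - 1) * ‖x‖ ^ (2 * n - 1)) := by
            ring
        _ = ‖A‖ * ((1 + q x) ^ (p - 1) * ‖x‖ ^ (2 * n - 1)) := by
            rw [show p * (2 * (n:ℝ)) = 1 by rw [hp]; field_simp]
            ring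
        _ ≤ ‖A‖ * 1 := mul_le_mul_of_nonneg_left hpow (norm_nonneg _)
        _ = ‖A‖ := mul_one _
    exact_mod_cast hBn
  · -- positive infimum
    refine ⟨(2:ℝ) ^ p - 1, ?_, ?_⟩
    · have : (1:ℝ) < 2 ^ p := by
        rw [show (1:ℝ) = (2:ℝ) ^ (0:ℝ) by simp]
        exact Real.rpow_lt_rpow_left_iff (by norm_num) |>.2 hppos
      linarith
    · intro x hx
      rw [hQ x]
      have h1 : (1:ℝ) ≤ ‖x‖ ^ (2 * n) := by
        calc (1:ℝ) = 1 ^ (2 * n) := by simp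
          _ ≤ ‖x‖ ^ (2 * n) := pow_le_pow_left₀ (by norm_num) hx _
      have h2 : (2:ℝ) ^ p ≤ (1 + q x) ^ p :=
        Real.rpow_le_rpow (by norm_num) (by linarith [hql x]) hppos.le
      linarith
  · rw [hQ 0, hq00]; simp
  · intro r hr x hQx
    by_contra h
    push_neg at h
    have := keyQ x
    nlinarith
  · intro x hx
    have := keyQ x
    linarith
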